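/- arXiv:2602.07692 — 2 statements merged into one kernel-verified Lean document; each statement's English description precedes it below -/
import Mathlib

section
/- If the scope function a is transitive (y ∈ a(x) implies a(y) ⊆ a(x)), then cl*_a is idempotent: cl*_a(cl*_a(A)) = cl*_a(A) for every subset A of X; equivalently (A ∪ A^a)^a ⊆ A ∪ A^a. -/
open Set

theorem stmt_11 {X : Type*} [TopologicalSpace X] (I : Set (Set X))
    (hI_down : ∀ {A B : Set X}, A ∈ I → B ⊆ A → B ∈ I)
    (hI_union : ∀ {A B : Set X}, A ∈ I → B ∈ I → A ∪ B ∈ I)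
    (a : X → Set X) (ha_open : ∀ x, IsOpen (a x)) (ha_mem : ∀ x, x ∈ a x)
    (ha_trans : ∀ x y, y ∈ a x → a y ⊆ a x)
    (A : Set X) :
    (let cls : Set X → Set X := fun S => S ∪ {x : X | a x ∩ S ∉ I}
     cls (cls A) = cls A) ∧
    {x : X | a x ∩ (A ∪ {y : X | a y ∩ A ∉ I}) ∉ I} ⊆ A ∪ {y : X | a y ∩ A ∉ I} := by
  have key : {x : X | a x ∩ (A ∪ {y : X | a y ∩ A ∉ I}) ∉ I} ⊆
      A ∪ {y : X | a y ∩ A ∉ I} := by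
    intro x hx
    simp only [mem_setOf_eq] at hx
    right
    simp only [mem_setOf_eq]
    intro hxA
    apply hx
    have hsub : a x ∩ (A ∪ {y : X | a y ∩ A ∉ I}) ⊆
        (a x ∩ A) ∪ (a x ∩ {y : X | a y ∩ A ∉ I}) := by
      rw [inter_union_distrib_left]
    refine hI_down (hI_union hxA ?_) hsub
    -- a x ∩ {y | a y ∩ A ∉ I} is empty
    have : a x ∩ {y : X | a y ∩ A ∉ I} = ∅ := by
      ext y
      simp only [mem_inter_iff, mem_setOf_eq, mem_empty_iff_false, iff_false, not_and]
      intro hy hyA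
      exact hyA (hI_down hxA (fun z hz => ⟨ha_trans x y hy hz.1, hz.2⟩))
    rw [this]
    exact hI_down hxA (empty_subset _)
  constructor
  · intro cls
    apply Subset.antisymm
    · intro x hx
      rcases hx with h | h
      · exact h
      · exact Or.imp_right (fun h' => h') (key h) |>.elim Or.inl (fun h' => Or.inr h')
    · exact subset_union_left
  · exact key
end

section
/- For a transitive scope function a, every basic set of the form a(y) \ J with J ∈ I is ideal-aura open: B = a(y) \ J satisfies B ⊆ ψ_a(B), i.e., for every x ∈ B, a(x) \ B ∈ I. -/
open Set

theorem stmt_17 {X : Type*} [TopologicalSpace X] (I : Set (Set X))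
    (hI_down : ∀ {A B : Set X}, A ∈ I → B ⊆ A → B ∈ I)
    (hI_union : ∀ {A B : Set X}, A ∈ I → B ∈ I → A ∪ B ∈ I)
    (a : X → Set X) (ha_open : ∀ x, IsOpen (a x)) (ha_mem : ∀ x, x ∈ a x)
    (ha_trans : ∀ x y, y ∈ a x → a y ⊆ a x)
    (y : X) (J : Set X) (hJ : J ∈ I) :
    a y \ J ⊆ {x : X | a x \ (a y \ J) ∈ I} := by
  intro x hx
  have hsub : a x ⊆ a y := ha_trans y x hx.1
  refine hI_down hJ ?_
  intro z hz
  by_contra hzJ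
  exact hz.2 ⟨hsub hz.1, hzJ⟩
end
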